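/- arXiv:1303.3261 — 2 statements merged into one kernel-verified Lean document; each statement's English description precedes it below -/
import Mathlib

section
/- Let A be a Hopf *-algebra over ℂ: a Hopf algebra over ℂ with comultiplication Δ, counit ε and antipode S, which is also a *-algebra, such that S is bijective, ε(S(a)) = ε(a) for all a, S⁻¹(a) = (S(a*))* for all a, and (as in any Hopf algebra with bijective antipode) for every a with Δ(a) = Σᵢ a_{(1,i)} ⊗ a_{(2,i)} one has Σᵢ S(a_{(1,i)})·a_{(2,i)} = ε(a)·1 = Σᵢ S⁻¹(a_{(2,i)})·a_{(1,i)} and Σᵢ ε(a_{(1,i)})·a_{(2,i)} = a = Σᵢ a_{(1,i)}·ε(a_{(2,i)}). Let H be a complex Hilbert space whose inner product ⟨·,·⟩ is linear in the first variable, let c : A → H be ℂ-linear, and define L : A → ℂ by L(a) = ½ Σᵢ ⟨c(a_{(1,i)}), c(S((a_{(2,i)})*))⟩ whenever Δ(a) = Σᵢ a_{(1,i)} ⊗ a_{(2,i)} (this is well defined because (a,b) ↦ ⟨c(a), c(S(b*))⟩ is ℂ-bilinear). Assume that L(1) = 0 and that c and L satisfy ⟨c(a), c(b)⟩ = −L(b*a)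 + ε(a)·conj(L(b)) + L(a)·conj(ε(b)) for all a, b ∈ A (as holds when c is a real cocycle). Then L(S(a)) = L(a) for all a ∈ A. -/
open scoped TensorProduct

/-- Let `A` be a Hopf *-algebra over ℂ with comultiplication `Δ`, counit `ε`
and antipode `S` (bijective, with inverse `Sinv`), satisfying `ε ∘ S = ε`,
`S⁻¹ a = (S a*)*`, the antipode identities and the counit identities for any Sweedler
decomposition `Δ a = Σᵢ a1 i ⊗ a2 i`.  Let `c : A → H` be ℂ-linear into a complex Hilbert
space and let `L : A → ℂ` be given by Vergnioux's formula
`L a = ½ Σᵢ ⟨c (a1 i), c (S (star (a2 i)))⟩` (inner product linear in the first variable;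
in Mathlib's convention this is `⟪c (S (star (a2 i))), c (a1 i)⟫`).  If `L 1 = 0` and
`⟨c a, c b⟩ = -L(b* a) + ε(a) conj(L b) + L(a) conj(ε b)` for all `a b` (as holds for a
real cocycle `c`), then `L ∘ S = L`. -/
theorem statement2 {A : Type*} [Ring A] [Algebra ℂ A] [StarRing A] [StarModule ℂ A]
    {H : Type*} [NormedAddCommGroup H] [InnerProductSpace ℂ H]
    (Δ : A →ₗ[ℂ] A ⊗[ℂ] A) (ε : A →⋆ₐ[ℂ] ℂ) (S Sinv : A →ₗ[ℂ] A)
    (hS₁ : ∀ a, Sinv (S a) = a) (hS₂ : ∀ a, S (Sinv a) = a)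
    (hεS : ∀ a, ε (S a) = ε a)
    (hSinvStar : ∀ a, Sinv a = star (S (star a)))
    (hSweedler : ∀ a : A, ∃ (m : ℕ) (a1 a2 : Fin m → A),
        Δ a = ∑ i, a1 i ⊗ₜ[ℂ] a2 i)
    (hAntipode : ∀ (a : A) (m : ℕ) (a1 a2 : Fin m → A),
        Δ a = ∑ i, a1 i ⊗ₜ[ℂ] a2 i →
        (∑ i, S (a1 i) * a2 i = ε a • (1 : A)) ∧
        (∑ i, Sinv (a2 i) * a1 i = ε a • (1 : A)) ∧
        (∑ i, ε (a1 i) • a2 i = a) ∧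
        (∑ i, ε (a2 i) • a1 i = a))
    (c : A →ₗ[ℂ] H) (L : A →ₗ[ℂ] ℂ)
    (hLdef : ∀ (a : A) (m : ℕ) (a1 a2 : Fin m → A),
        Δ a = ∑ i, a1 i ⊗ₜ[ℂ] a2 i →
        L a = (1 / 2 : ℂ) * ∑ i, (inner ℂ (c (S (star (a2 i)))) (c (a1 i)) : ℂ))
    (hL1 : L 1 = 0)
    (hcocycle : ∀ a b : A, (inner ℂ (c b) (c a) : ℂ)
        = -(L (star b * a)) + ε a * (starRingEnd ℂ) (L b) + L a * (starRingEnd ℂ) (ε b)) :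
    ∀ a : A, L (S a) = L a := by

  -- L is hermitian: L (star b) = conj (L b)
  have h0 : ∀ b : A, (inner ℂ (c 1) (c b) : ℂ) = 0 := by
    intro b
    have h := hcocycle b 1
    simpa [hL1, star_one, one_mul, map_one] using h
  have herm : ∀ b : A, L (star b) = (starRingEnd ℂ) (L b) := by
    intro b
    have h := hcocycle 1 b
    have h3 : (inner ℂ (c b) (c 1) : ℂ) = 0 := by
      rw [← inner_conj_symm, h0 b, map_zero]
    rw [h3] at h
    simp only [mul_one, map_one, hL1, zero_mul, add_zero, one_mul] at h
    linear_combination h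
  have key : ∀ x : A, L x = L (Sinv x) := by
    intro x
    obtain ⟨m, a1, a2, hΔ⟩ := hSweedler x
    obtain ⟨hA1, hA2, hC1, hC2⟩ := hAntipode x m a1 a2 hΔ
    have hterm : ∀ i, (inner ℂ (c (S (star (a2 i)))) (c (a1 i)) : ℂ)
        = -(L (Sinv (a2 i) * a1 i)) + ε (a1 i) * L (Sinv (a2 i))
          + L (a1 i) * ε (a2 i) := by
      intro i
      have e1 : star (S (star (a2 i))) = Sinv (a2 i) := (hSinvStar (a2 i)).symm
      have e2 : (starRingEnd ℂ) (L (S (star (a2 i)))) = L (Sinv (a2 i)) := by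
        rw [← herm, e1]
      have e3 : (starRingEnd ℂ) (ε (S (star (a2 i)))) = ε (a2 i) := by
        rw [hεS, map_star]
        rw [starRingEnd_apply, star_star]
      rw [hcocycle (a1 i) (S (star (a2 i))), e1, e2, e3]
    have hsum1 : ∑ i, L (Sinv (a2 i) * a1 i) = 0 := by
      rw [← map_sum, hA2]
      rw [map_smul, hL1, smul_zero]
    have hsum2 : ∑ i, ε (a1 i) * L (Sinv (a2 i)) = L (Sinv x) := by
      have e : ∀ i ∈ Finset.univ, ε (a1 i) * L (Sinv (a2 i))
          = L (Sinv (ε (a1 i) • a2 i)) := by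
        intro i _
        simp [map_smul, smul_eq_mul]
      rw [Finset.sum_congr rfl e, ← map_sum, ← map_sum, hC1]
    have hsum3 : ∑ i, L (a1 i) * ε (a2 i) = L x := by
      have e : ∀ i ∈ Finset.univ, L (a1 i) * ε (a2 i)
          = L (ε (a2 i) • a1 i) := by
        intro i _
        simp [map_smul, smul_eq_mul, mul_comm]
      rw [Finset.sum_congr rfl e, ← map_sum, hC2]
    have hLx : L x = (1 / 2 : ℂ) * (∑ i, (-(L (Sinv (a2 i) * a1 i))
        + ε (a1 i) * L (Sinv (a2 i)) + L (a1 i) * ε (a2 i))) := by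
      rw [hLdef x m a1 a2 hΔ]
      congr 1
      exact Finset.sum_congr rfl fun i _ => hterm i
    rw [Finset.sum_add_distrib, Finset.sum_add_distrib, Finset.sum_neg_distrib,
      hsum1, hsum2, hsum3] at hLx
    linear_combination 2 * hLx
  intro a
  have h := key (S a)
  rw [hS₁] at h
  exact h
end

section
/- Let I be a countable set and for each α ∈ I let n_α be a positive integer. Let (F_k)_{k≥1} be an increasing sequence of finite subsets of I whose union is I, let (β_k)_{k≥1} be positive reals increasing to ∞, and let (ε_k)_{k≥1} be positive reals with Σ_k β_k·ε_k < ∞. For each k ≥ 1 and α ∈ I let M_k^α be a Hermitian n_α×n_α complex matrix with operator norm ‖M_k^α‖ ≤ 1, such that ‖I_{n_α} − M_k^α‖ ≤ ε_k for every α ∈ F_k, and such that for each k the set {α ∈ I : ‖M_k^α‖ > 1/2} is finite. Then: (a) for every α ∈ I the series L^α := Σ_{k≥1} β_k·(I_{n_α} − M_k^α) converges in norm in the space of n_α×n_α matrices; (b) each L^α is Hermitian and positive semidefinite; (c) for every M > 0 there exists a finite subset F ⊆ I such that L^α − M·I_{n_α} is positive semidefinite for every α ∈ I \ F. -/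
open scoped ComplexOrder

namespace Stmt8Aux

variable {n : Type*} [Fintype n] [DecidableEq n]

open Matrix

lemma dot_eq_inner (A : Matrix n n ℂ) (x : n → ℂ) :
    star x ⬝ᵥ A *ᵥ x =
      inner ℂ ((WithLp.equiv 2 (n → ℂ)).symm x)
        (Matrix.toEuclideanCLM (𝕜 := ℂ) A ((WithLp.equiv 2 (n → ℂ)).symm x)) := by
  exact dotProduct_comm _ _

lemma entry_norm_le (A : Matrix n n ℂ) (i j : n) :
    ‖A i j‖ ≤ ‖Matrix.toEuclideanCLM (𝕜 := ℂ) A‖ := by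
  classical
  set T := Matrix.toEuclideanCLM (𝕜 := ℂ) A with hT
  have h1 : T (EuclideanSpace.single j (1 : ℂ)) =
      (WithLp.equiv 2 (n → ℂ)).symm (A *ᵥ Pi.single j 1) := by
    rw [show EuclideanSpace.single j (1 : ℂ) =
        (WithLp.equiv 2 (n → ℂ)).symm (Pi.single j 1) from rfl,
      hT, WithLp.equiv_symm_apply, Matrix.toEuclideanCLM_toLp]
  have h2 : ‖A i j‖ =
      ‖inner (𝕜 := ℂ) (EuclideanSpace.single i (1 : ℂ))
        (T (EuclideanSpace.single j (1 : ℂ)))‖ := by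
    rw [EuclideanSpace.inner_single_left, h1]
    simp [Matrix.mulVec_single]
  rw [h2]
  calc ‖inner (𝕜 := ℂ) (EuclideanSpace.single i (1 : ℂ))
        (T (EuclideanSpace.single j (1 : ℂ)))‖
      ≤ ‖EuclideanSpace.single i (1 : ℂ)‖ * ‖T (EuclideanSpace.single j (1 : ℂ))‖ :=
        norm_inner_le_norm _ _
    _ ≤ ‖EuclideanSpace.single i (1 : ℂ)‖ * (‖T‖ * ‖EuclideanSpace.single j (1 : ℂ)‖) := by
        gcongr
        exact T.le_opNorm _
    _ = ‖T‖ := by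
        rw [EuclideanSpace.norm_single, EuclideanSpace.norm_single, norm_one, one_mul, mul_one]

lemma summable_of_entries {f : ℕ → Matrix n n ℂ}
    (h : ∀ i j, Summable fun k => f k i j) : Summable f :=
  Pi.summable.2 fun i => Pi.summable.2 fun j => h i j

lemma herm_dot_real {B : Matrix n n ℂ} (hB : B.IsHermitian) (x : n → ℂ) :
    (((star x ⬝ᵥ B *ᵥ x).re : ℂ)) = star x ⬝ᵥ B *ᵥ x := by
  rw [← Complex.conj_eq_iff_re]
  have hsym : (Matrix.toEuclideanLin B).IsSymmetric :=
    Matrix.isHermitian_iff_isSymmetric.mp hB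
  rw [dot_eq_inner]
  set y := (WithLp.equiv 2 (n → ℂ)).symm x with hy
  have hcoe : Matrix.toEuclideanCLM (𝕜 := ℂ) B y = Matrix.toEuclideanLin B y := rfl
  rw [hcoe, inner_conj_symm]
  exact hsym _ _

lemma psd_smul_one_sub {B : Matrix n n ℂ} (hB : B.IsHermitian) {c : ℝ}
    (hc : ‖Matrix.toEuclideanCLM (𝕜 := ℂ) B‖ ≤ c) :
    (((c : ℂ)) • (1 : Matrix n n ℂ) - B).PosSemidef := by
  refine Matrix.PosSemidef.of_dotProduct_mulVec_nonneg ?_ ?_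
  · show _ᴴ = _
    rw [Matrix.conjTranspose_sub, Matrix.conjTranspose_smul, Matrix.conjTranspose_one, hB.eq]
    simp [Complex.star_def, Complex.conj_ofReal]
  · intro x
    have hexp : star x ⬝ᵥ ((c : ℂ) • (1 : Matrix n n ℂ) - B) *ᵥ x
        = (c : ℂ) * (star x ⬝ᵥ x) - star x ⬝ᵥ B *ᵥ x := by
      simp [Matrix.sub_mulVec, dotProduct_sub, Matrix.smul_mulVec,
        Matrix.one_mulVec, dotProduct_smul, smul_eq_mul]
    rw [hexp]
    set y := (WithLp.equiv 2 (n → ℂ)).symm x with hy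
    have hxx : star x ⬝ᵥ x = ((‖y‖ ^ 2 : ℝ) : ℂ) := by
      rw [show star x ⬝ᵥ x = inner (𝕜 := ℂ) y y from
        dotProduct_comm _ _, inner_self_eq_norm_sq_to_K]
      norm_cast
    have hq := herm_dot_real hB x
    have hqle : (star x ⬝ᵥ B *ᵥ x).re ≤ c * ‖y‖ ^ 2 := by
      have h1 : ‖star x ⬝ᵥ B *ᵥ x‖ ≤ c * ‖y‖ ^ 2 := by
        rw [dot_eq_inner]
        calc ‖inner (𝕜 := ℂ) y (Matrix.toEuclideanCLM (𝕜 := ℂ) B y)‖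
            ≤ ‖y‖ * ‖Matrix.toEuclideanCLM (𝕜 := ℂ) B y‖ := norm_inner_le_norm _ _
          _ ≤ ‖y‖ * (‖Matrix.toEuclideanCLM (𝕜 := ℂ) B‖ * ‖y‖) := by
              gcongr
              exact (Matrix.toEuclideanCLM (𝕜 := ℂ) B).le_opNorm _
          _ ≤ ‖y‖ * (c * ‖y‖) := by gcongr
          _ = c * ‖y‖ ^ 2 := by ring
      calc (star x ⬝ᵥ B *ᵥ x).re ≤ ‖star x ⬝ᵥ B *ᵥ x‖ := Complex.re_le_norm _
        _ ≤ c * ‖y‖ ^ 2 := h1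
    have hfin : (0 : ℝ) ≤ c * ‖y‖ ^ 2 - (star x ⬝ᵥ B *ᵥ x).re := by linarith
    calc (0 : ℂ) ≤ ((c * ‖y‖ ^ 2 - (star x ⬝ᵥ B *ᵥ x).re : ℝ) : ℂ) :=
          Complex.zero_le_real.2 hfin
      _ = (c : ℂ) * (star x ⬝ᵥ x) - star x ⬝ᵥ B *ᵥ x := by
          rw [hxx]
          conv_rhs => rw [← hq]
          push_cast
          ring

lemma real_smul_mat (r : ℝ) (A : Matrix n n ℂ) : r • A = ((r : ℂ)) • A := by
  ext i j
  simp [Complex.real_smul]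

lemma psd_real_smul {A : Matrix n n ℂ} (hA : A.PosSemidef) {r : ℝ} (hr : 0 ≤ r) :
    (r • A).PosSemidef := by
  rw [real_smul_mat]
  refine Matrix.PosSemidef.of_dotProduct_mulVec_nonneg ?_ ?_
  · show _ᴴ = _
    rw [Matrix.conjTranspose_smul, hA.1.eq]
    simp [Complex.star_def, Complex.conj_ofReal]
  · intro x
    rw [Matrix.smul_mulVec, dotProduct_smul, smul_eq_mul]
    exact mul_nonneg (Complex.zero_le_real.2 hr) (hA.dotProduct_mulVec_nonneg x)

/-- The quadratic-form functional as a linear map. -/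
noncomputable def dotLM (x : n → ℂ) : Matrix n n ℂ →ₗ[ℂ] ℂ where
  toFun A := star x ⬝ᵥ A *ᵥ x
  map_add' A B := by simp [Matrix.add_mulVec, dotProduct_add]
  map_smul' c A := by simp [Matrix.smul_mulVec, dotProduct_smul, smul_eq_mul]

lemma summable_dot {f : ℕ → Matrix n n ℂ} (hf : Summable f) (x : n → ℂ) :
    Summable fun k => star x ⬝ᵥ (f k) *ᵥ x :=
  (hf.hasSum.map (dotLM x).toAddMonoidHom
    (dotLM x).continuous_of_finiteDimensional).summable

lemma dot_tsum {f : ℕ → Matrix n n ℂ} (hf : Summable f) (x : n → ℂ) :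
    star x ⬝ᵥ (∑' k, f k) *ᵥ x = ∑' k, star x ⬝ᵥ (f k) *ᵥ x :=
  ((hf.hasSum.map (dotLM x).toAddMonoidHom
    (dotLM x).continuous_of_finiteDimensional).tsum_eq).symm

lemma herm_real_smul_one (r : ℝ) : ((r : ℝ) • (1 : Matrix n n ℂ)).IsHermitian := by
  rw [real_smul_mat]
  show _ᴴ = _
  rw [Matrix.conjTranspose_smul, Matrix.conjTranspose_one]
  simp [Complex.star_def, Complex.conj_ofReal]

end Stmt8Aux

open Matrix

/-- Let `I` be countable with dimensions `nn α ≥ 1`, `(F k)` an increasing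
sequence of finite subsets of `I` covering `I`, `(β k)` positive reals increasing to `∞`,
`(ε k)` positive reals with `Σ β k * ε k < ∞`.  Suppose the matrices `M k α` are Hermitian
contractions (operator norm `≤ 1`) with `‖1 - M k α‖ ≤ ε k` for `α ∈ F k`, and for each
`k` the set `{α : ‖M k α‖ > 1/2}` is finite.  Then:
(a) for each `α` the series `L α = Σ_k β k • (1 - M k α)` converges in norm;
(b) each `L α` is Hermitian and positive semidefinite;
(c) for every `C > 0` there is a finite `G ⊆ I` with `L α - C • 1` positive semidefinite
for all `α ∉ G`. -/
theorem statement8 {I : Type*} [Countable I] (nn : I → ℕ) (hnn : ∀ α, 0 < nn α)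
    (F : ℕ → Finset I) (hFmono : Monotone F) (hFcover : ∀ α : I, ∃ k, α ∈ F k)
    (β : ℕ → ℝ) (hβpos : ∀ k, 0 < β k) (hβmono : Monotone β)
    (hβtop : Filter.Tendsto β Filter.atTop Filter.atTop)
    (ε : ℕ → ℝ) (hεpos : ∀ k, 0 < ε k) (hsum : Summable fun k => β k * ε k)
    (M : ∀ (_ : ℕ) (α : I), Matrix (Fin (nn α)) (Fin (nn α)) ℂ)
    (hherm : ∀ k α, (M k α).IsHermitian)
    (hnorm : ∀ k α, ‖Matrix.toEuclideanCLM (𝕜 := ℂ) (M k α)‖ ≤ 1)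
    (hclose : ∀ k, ∀ α ∈ F k,
      ‖Matrix.toEuclideanCLM (𝕜 := ℂ)
        ((1 : Matrix (Fin (nn α)) (Fin (nn α)) ℂ) - M k α)‖ ≤ ε k)
    (hfin : ∀ k, {α : I | 1 / 2 < ‖Matrix.toEuclideanCLM (𝕜 := ℂ) (M k α)‖}.Finite) :
    (∀ α, Summable fun k => β k • ((1 : Matrix (Fin (nn α)) (Fin (nn α)) ℂ) - M k α)) ∧
    (∀ α, (∑' k, β k • ((1 : Matrix (Fin (nn α)) (Fin (nn α)) ℂ) - M k α)).IsHermitian ∧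
      (∑' k, β k • ((1 : Matrix (Fin (nn α)) (Fin (nn α)) ℂ) - M k α)).PosSemidef) ∧
    (∀ C : ℝ, 0 < C → ∃ G : Finset I, ∀ α ∉ G,
      ((∑' k, β k • ((1 : Matrix (Fin (nn α)) (Fin (nn α)) ℂ) - M k α))
        - C • (1 : Matrix (Fin (nn α)) (Fin (nn α)) ℂ)).PosSemidef) := by
  haveI := Complex.orderClosedTopology
  classical
  -- each summand is positive semidefinite
  have honesub : ∀ (α : I) (k : ℕ),
      ((1 : Matrix (Fin (nn α)) (Fin (nn α)) ℂ) - M k α).PosSemidef := by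
    intro α k
    have h := Stmt8Aux.psd_smul_one_sub (hherm k α) (hnorm k α)
    simpa using h
  have hA_psd : ∀ (α : I) (k : ℕ),
      (β k • ((1 : Matrix (Fin (nn α)) (Fin (nn α)) ℂ) - M k α)).PosSemidef :=
    fun α k => Stmt8Aux.psd_real_smul (honesub α k) (hβpos k).le
  -- (a) summability
  have hsummableA : ∀ α,
      Summable fun k => β k • ((1 : Matrix (Fin (nn α)) (Fin (nn α)) ℂ) - M k α) := by
    intro α
    obtain ⟨k₀, hk₀⟩ := hFcover α
    refine Stmt8Aux.summable_of_entries fun i j => ?_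
    refine Summable.of_norm_bounded_eventually_nat hsum ?_
    filter_upwards [Filter.eventually_ge_atTop k₀] with k hk
    have hmem : α ∈ F k := hFmono hk hk₀
    have hentry : ‖((1 : Matrix (Fin (nn α)) (Fin (nn α)) ℂ) - M k α) i j‖ ≤ ε k :=
      (Stmt8Aux.entry_norm_le _ i j).trans (hclose k α hmem)
    calc ‖(β k • ((1 : Matrix (Fin (nn α)) (Fin (nn α)) ℂ) - M k α)) i j‖
        = β k * ‖((1 : Matrix (Fin (nn α)) (Fin (nn α)) ℂ) - M k α) i j‖ := by
          rw [Matrix.smul_apply, norm_smul, Real.norm_eq_abs, abs_of_pos (hβpos k)]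
      _ ≤ β k * ε k := mul_le_mul_of_nonneg_left hentry (hβpos k).le
  -- (b) positive semidefiniteness of the sum
  have hLpsd : ∀ α,
      (∑' k, β k • ((1 : Matrix (Fin (nn α)) (Fin (nn α)) ℂ) - M k α)).PosSemidef := by
    intro α
    refine Matrix.PosSemidef.of_dotProduct_mulVec_nonneg ?_ ?_
    · show _ᴴ = _
      rw [Matrix.conjTranspose_tsum]
      exact tsum_congr fun k => (hA_psd α k).1
    · intro x
      rw [Stmt8Aux.dot_tsum (hsummableA α) x]
      exact tsum_nonneg fun k => (hA_psd α k).dotProduct_mulVec_nonneg x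
  refine ⟨hsummableA, fun α => ⟨(hLpsd α).1, hLpsd α⟩, ?_⟩
  -- (c) properness
  intro C hC
  obtain ⟨k₁, hk₁⟩ := (hβtop.eventually_ge_atTop (2 * C)).exists
  refine ⟨(hfin k₁).toFinset, fun α hα => ?_⟩
  have hMhalf : ‖Matrix.toEuclideanCLM (𝕜 := ℂ) (M k₁ α)‖ ≤ 1 / 2 := by
    refine not_lt.1 fun h => hα ?_
    exact (hfin k₁).mem_toFinset.2 h
  refine Matrix.PosSemidef.of_dotProduct_mulVec_nonneg ?_ ?_
  · show _ᴴ = _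
    rw [Matrix.conjTranspose_sub, (hLpsd α).1.eq, (Stmt8Aux.herm_real_smul_one C).eq]
  · intro x
    set s : ℂ := star x ⬝ᵥ x with hs_def
    have hs : (0 : ℂ) ≤ s := dotProduct_star_self_nonneg x
    -- quadratic form of the k₁-th term dominates C * s
    have h2 : (0 : ℂ) ≤ star x ⬝ᵥ
        ((((1 : ℝ) / 2 : ℝ) : ℂ) • (1 : Matrix (Fin (nn α)) (Fin (nn α)) ℂ) - M k₁ α) *ᵥ x :=
      (Stmt8Aux.psd_smul_one_sub (hherm k₁ α) hMhalf).dotProduct_mulVec_nonneg x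
    have hkey : star x ⬝ᵥ ((1 : Matrix (Fin (nn α)) (Fin (nn α)) ℂ) - M k₁ α) *ᵥ x
        = star x ⬝ᵥ ((((1 : ℝ) / 2 : ℝ) : ℂ) • (1 : Matrix (Fin (nn α)) (Fin (nn α)) ℂ)
            - M k₁ α) *ᵥ x + (1 / 2 : ℂ) * s := by
      simp only [Matrix.sub_mulVec, dotProduct_sub, Matrix.smul_mulVec,
        Matrix.one_mulVec, dotProduct_smul, smul_eq_mul, hs_def]
      push_cast
      ring
    have h3 : (1 / 2 : ℂ) * s ≤
        star x ⬝ᵥ ((1 : Matrix (Fin (nn α)) (Fin (nn α)) ℂ) - M k₁ α) *ᵥ x := by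
      rw [hkey]
      exact le_add_of_nonneg_left h2
    have e1 : star x ⬝ᵥ (β k₁ • ((1 : Matrix (Fin (nn α)) (Fin (nn α)) ℂ) - M k₁ α)) *ᵥ x
        = ((β k₁ : ℂ)) * (star x ⬝ᵥ ((1 : Matrix (Fin (nn α)) (Fin (nn α)) ℂ) - M k₁ α) *ᵥ x) := by
      rw [Stmt8Aux.real_smul_mat]
      rw [Matrix.smul_mulVec, dotProduct_smul, smul_eq_mul]
    have hterm : (C : ℂ) * s ≤
        star x ⬝ᵥ (β k₁ • ((1 : Matrix (Fin (nn α)) (Fin (nn α)) ℂ) - M k₁ α)) *ᵥ x := by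
      rw [e1]
      calc (C : ℂ) * s = ((2 * C : ℝ) : ℂ) * ((1 / 2 : ℂ) * s) := by push_cast; ring
        _ ≤ ((β k₁ : ℂ)) * ((1 / 2 : ℂ) * s) := by
            refine mul_le_mul_of_nonneg_right ?_ ?_
            · exact_mod_cast Complex.real_le_real.2 hk₁
            · refine mul_nonneg ?_ hs
              rw [show (1 / 2 : ℂ) = ((1 / 2 : ℝ) : ℂ) by norm_num]
              exact Complex.zero_le_real.2 (by norm_num)
        _ ≤ ((β k₁ : ℂ)) * (star x ⬝ᵥ ((1 : Matrix (Fin (nn α)) (Fin (nn α)) ℂ) - M k₁ α) *ᵥ x) := by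
            refine mul_le_mul_of_nonneg_left h3 ?_
            exact Complex.zero_le_real.2 (hβpos k₁).le
    have hle_tsum : star x ⬝ᵥ (β k₁ • ((1 : Matrix (Fin (nn α)) (Fin (nn α)) ℂ) - M k₁ α)) *ᵥ x
        ≤ ∑' k, star x ⬝ᵥ (β k • ((1 : Matrix (Fin (nn α)) (Fin (nn α)) ℂ) - M k α)) *ᵥ x :=
      Summable.le_tsum (Stmt8Aux.summable_dot (hsummableA α) x) k₁ fun j _ => (hA_psd α j).dotProduct_mulVec_nonneg x
    have hexp2 : star x ⬝ᵥ ((∑' k, β k • ((1 : Matrix (Fin (nn α)) (Fin (nn α)) ℂ) - M k α))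
          - C • (1 : Matrix (Fin (nn α)) (Fin (nn α)) ℂ)) *ᵥ x
        = (∑' k, star x ⬝ᵥ (β k • ((1 : Matrix (Fin (nn α)) (Fin (nn α)) ℂ) - M k α)) *ᵥ x)
          - (C : ℂ) * s := by
      rw [Matrix.sub_mulVec, dotProduct_sub, Stmt8Aux.dot_tsum (hsummableA α) x,
        Stmt8Aux.real_smul_mat, Matrix.smul_mulVec, dotProduct_smul, smul_eq_mul,
        Matrix.one_mulVec]
    rw [hexp2, sub_nonneg]
    exact le_trans hterm hle_tsum
end
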